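/- Let 0 < q < 1, ν ∈ ℝ, μ > 0 and δ ∈ {0,1}. Define the quantum Whittaker vector ψ_R(z̄, z) = ξ₁(z̄) ξ₂(z), where ξ₁(w) = ∑_{n=0}^∞ (iμ)^n q^{n(n−1)/2 + n(1−iν)} (1−q²)^n w^n / (q²;q²)_n and ξ₂(z) = ∑_{k=0}^∞ (iμ)^k q^{(3−2δ)k(k−1)/2 + k(1−iν) + (iνδ−2δ+2)k} (1−q²)^k z^k / (q²;q²)_k (both series converge for all arguments). Let π(B) act in the variable z by (ψ.π(B))(z̄,z) = q^{iν/2}(ψ(z̄, q^{−1}z) − ψ(z̄, qz))/((1−q²)z) and π(B*) act in the variable z̄ by (π(B*).ψ)(z̄,z) = q^{iν/2}(ψ(q^{−1}z̄, z) − ψ(qz̄, z))/((1−q²)z̄). Then for all z, z̄ ∈ ℂ∖{0}: (π(B*).(ψ_R.π(B)))(z̄, z) = −μ² q^{(iν−2)(δ−1)} ψ_R(z̄, q^{2−2δ} z). -/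

import Mathlib

/-- The finite q-Pochhammer symbol `(a;Q)_n = ∏_{j<n} (1 − a Q^j)`. -/
noncomputable def qPoch (Q a : ℂ) (n : ℕ) : ℂ :=
  ∏ j ∈ Finset.range n, (1 - a * Q ^ j)

/-- `q^w = exp(w ln q)` for real `q > 0` and complex `w`. -/
noncomputable def qpow (q : ℝ) (w : ℂ) : ℂ := Complex.exp (w * (Real.log q : ℂ))

/-- `ξ₁(w) = ∑_n (iμ)^n q^{n(n−1)/2 + n(1−iν)} (1−q²)^n w^n/(q²;q²)_n`. -/
noncomputable def xi1 (q ν μ : ℝ) (w : ℂ) : ℂ :=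
  ∑' n : ℕ, (Complex.I * μ) ^ n
    * qpow q ((n : ℂ) * ((n : ℂ) - 1) / 2 + (n : ℂ) * (1 - Complex.I * ν))
    * (1 - (q : ℂ) ^ 2) ^ n * w ^ n / qPoch ((q : ℂ) ^ 2) ((q : ℂ) ^ 2) n

/-- `ξ₂(z) = ∑_k (iμ)^k q^{(3−2δ)k(k−1)/2 + k(1−iν) + (iνδ−2δ+2)k}(1−q²)^k z^k/(q²;q²)_k`. -/
noncomputable def xi2 (q ν μ : ℝ) (δ : ℕ) (z : ℂ) : ℂ :=
  ∑' k : ℕ, (Complex.I * μ) ^ k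
    * qpow q ((3 - 2 * (δ : ℂ)) * k * ((k : ℂ) - 1) / 2 + (k : ℂ) * (1 - Complex.I * ν)
        + (Complex.I * ν * δ - 2 * δ + 2) * k)
    * (1 - (q : ℂ) ^ 2) ^ k * z ^ k / qPoch ((q : ℂ) ^ 2) ((q : ℂ) ^ 2) k

/-- The quantum Whittaker vector `ψ_R(z̄,z) = ξ₁(z̄)ξ₂(z)`. -/
noncomputable def psiR (q ν μ : ℝ) (δ : ℕ) (zb z : ℂ) : ℂ :=
  xi1 q ν μ zb * xi2 q ν μ δ z

/-- `π(B)` acting in the holomorphic variable `z`. -/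
noncomputable def actB (q ν : ℝ) (ψ : ℂ → ℂ → ℂ) : ℂ → ℂ → ℂ :=
  fun zb z => qpow q (Complex.I * ν / 2) * (ψ zb ((q : ℂ)⁻¹ * z) - ψ zb ((q : ℂ) * z))
    / ((1 - (q : ℂ) ^ 2) * z)

/-- `π(B*)` acting in the antiholomorphic variable `z̄`. -/
noncomputable def actBstar (q ν : ℝ) (ψ : ℂ → ℂ → ℂ) : ℂ → ℂ → ℂ :=
  fun zb z => qpow q (Complex.I * ν / 2) * (ψ ((q : ℂ)⁻¹ * zb) z - ψ ((q : ℂ) * zb) z)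
    / ((1 - (q : ℂ) ^ 2) * zb)

/-! ### Auxiliary lemmas -/

section aux
variable {q : ℝ} (hq0 : 0 < q) (hq1 : q < 1)

lemma qpow_add' (a b : ℂ) : qpow q (a + b) = qpow q a * qpow q b := by
  simp [qpow, add_mul, Complex.exp_add]

lemma qpow_zero' : qpow q 0 = 1 := by simp [qpow]

include hq0 in
lemma qpow_one' : qpow q 1 = (q : ℂ) := by
  simp [qpow, ← Complex.ofReal_exp, Real.exp_log hq0]

include hq0 in
lemma qpow_natCast' (n : ℕ) : qpow q (n : ℂ) = (q : ℂ) ^ n := by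
  rw [qpow, Complex.exp_nat_mul]
  rw [show Complex.exp ((Real.log q : ℂ)) = qpow q 1 by simp [qpow], qpow_one' hq0]

lemma qpow_pow' (w : ℂ) (n : ℕ) : qpow q w ^ n = qpow q ((n : ℂ) * w) := by
  rw [qpow, qpow, ← Complex.exp_nat_mul]; ring_nf

include hq0 hq1 in
lemma qPoch_factor_ne (n : ℕ) : (1 - (q:ℂ)^2 * ((q:ℂ)^2)^n) ≠ 0 := by
  have h : ((q:ℂ)^2 * ((q:ℂ)^2)^n) = ((q^2 * (q^2)^n : ℝ) : ℂ) := by push_cast; ring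
  rw [h, ← Complex.ofReal_one, ← Complex.ofReal_sub]
  have h2 : q^2 < 1 := by nlinarith
  have h2' : 0 < q^2 := by positivity
  have h3 : q^2 * (q^2)^n < 1 := by
    calc q^2 * (q^2)^n ≤ q^2 * 1 :=
          mul_le_mul_of_nonneg_left (pow_le_one₀ h2'.le h2.le) h2'.le
      _ < 1 := by linarith
  have hne : (1 : ℝ) - q^2 * (q^2)^n ≠ 0 := by linarith
  exact_mod_cast hne

include hq0 hq1 in
lemma qPoch_ne_zero (n : ℕ) : qPoch ((q:ℂ)^2) ((q:ℂ)^2) n ≠ 0 := by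
  rw [qPoch, Finset.prod_ne_zero_iff]
  exact fun j _ => qPoch_factor_ne hq0 hq1 j

end aux

open Filter in
/-- The key shift identity for `q`-hypergeometric-type series whose coefficients
satisfy a first-order `q`-recursion. -/
lemma key_shift (q : ℝ) (hq0 : 0 < q) (hq1 : q < 1) (c : ℕ → ℂ) (l ρ : ℂ) (hρ : ‖ρ‖ ≤ 1)
    (hrec : ∀ n : ℕ, c (n+1) * ((q:ℂ)⁻¹ ^ (n+1) - (q:ℂ) ^ (n+1))
      = l * ρ ^ n * c n * (1 - (q:ℂ)^2)) (z : ℂ) :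
    (∑' n : ℕ, c n * ((q:ℂ)⁻¹ * z) ^ n) - (∑' n : ℕ, c n * ((q:ℂ) * z) ^ n)
      = l * (1 - (q:ℂ)^2) * z * ∑' n : ℕ, c n * (ρ * z) ^ n := by
  have hq2 : q^2 < 1 := by nlinarith
  have hd : ∀ n : ℕ, (0:ℝ) < q⁻¹^(n+1) - q^(n+1) := by
    intro n
    have h1 : q^(n+1) < 1 := pow_lt_one₀ hq0.le hq1 (Nat.succ_ne_zero n)
    have h2 : (1:ℝ) < q⁻¹ := (one_lt_inv₀ hq0).mpr hq1
    have h3 : (1:ℝ) ≤ q⁻¹^(n+1) := one_le_pow₀ h2.le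
    linarith
  have hnrec : ∀ n : ℕ, ‖c (n+1)‖ ≤ (‖l‖ * q^(n+1)) * ‖c n‖ := by
    intro n
    have h := congrArg norm (hrec n)
    have hcast : ((q:ℂ)⁻¹ ^ (n+1) - (q:ℂ) ^ (n+1)) = ((q⁻¹^(n+1) - q^(n+1) : ℝ) : ℂ) := by
      push_cast; ring
    have hcast2 : (1 - (q:ℂ)^2) = ((1 - q^2 : ℝ) : ℂ) := by push_cast; ring
    rw [norm_mul, norm_mul, norm_mul, norm_mul, norm_pow, hcast, hcast2,
      Complex.norm_real, Complex.norm_real, Real.norm_of_nonneg (hd n).le,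
      Real.norm_of_nonneg (by linarith)] at h
    have hρn : ‖ρ‖^n ≤ 1 := pow_le_one₀ (norm_nonneg _) hρ
    have hkey1 : ‖c (n+1)‖ * (q⁻¹^(n+1) - q^(n+1)) ≤ ‖l‖ * ‖c n‖ * (1 - q^2) := by
      rw [h]
      have : ‖l‖ * ‖ρ‖^n * ‖c n‖ ≤ ‖l‖ * 1 * ‖c n‖ := by gcongr
      nlinarith [norm_nonneg l, norm_nonneg (c n)]
    have hid : q^(n+1) * (q⁻¹^(n+1) - q^(n+1)) = 1 - q^(2*(n+1)) := by
      rw [mul_sub, ← mul_pow, mul_inv_cancel₀ hq0.ne', one_pow, ← pow_add, two_mul]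
    have hq2n : q^(2*(n+1)) ≤ q^2 := pow_le_pow_of_le_one hq0.le hq1.le (by omega)
    rw [← mul_le_mul_iff_of_pos_right (hd n)]
    calc ‖c (n+1)‖ * (q⁻¹^(n+1) - q^(n+1)) ≤ ‖l‖ * ‖c n‖ * (1 - q^2) := hkey1
      _ ≤ ‖l‖ * ‖c n‖ * (1 - q^(2*(n+1))) := by
          have : (0:ℝ) ≤ ‖l‖ * ‖c n‖ := by positivity
          nlinarith
      _ = ‖l‖ * q^(n+1) * ‖c n‖ * (q⁻¹^(n+1) - q^(n+1)) := by rw [← hid]; ring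
  have hS : ∀ w : ℂ, Summable (fun n : ℕ => c n * w ^ n) := by
    intro w
    apply summable_of_ratio_norm_eventually_le (r := 1/2) (by norm_num)
    have htend : Tendsto (fun n : ℕ => (‖l‖ * ‖w‖ * q) * q^n) atTop (nhds 0) := by
      simpa using (tendsto_pow_atTop_nhds_zero_of_lt_one hq0.le hq1).const_mul (‖l‖ * ‖w‖ * q)
    have hev : ∀ᶠ n : ℕ in atTop, (‖l‖ * ‖w‖ * q) * q^n ≤ 1/2 :=
      htend.eventually_le_const (by norm_num)
    filter_upwards [hev] with n hn
    rw [norm_mul, norm_mul, norm_pow, norm_pow]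
    calc ‖c (n+1)‖ * ‖w‖^(n+1) ≤ ((‖l‖ * q^(n+1)) * ‖c n‖) * ‖w‖^(n+1) := by
          gcongr; exact hnrec n
      _ = ((‖l‖ * ‖w‖ * q) * q^n) * (‖c n‖ * ‖w‖^n) := by ring
      _ ≤ 1/2 * (‖c n‖ * ‖w‖^n) := mul_le_mul_of_nonneg_right hn (by positivity)
  have h1 := hS ((q:ℂ)⁻¹ * z)
  have h2 := hS ((q:ℂ) * z)
  rw [← Summable.tsum_sub h1 h2, Summable.tsum_eq_zero_add (h1.sub h2)]
  simp only [pow_zero, mul_one, sub_self, zero_add]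
  have hcong : ∀ n : ℕ, c (n+1) * ((q:ℂ)⁻¹ * z) ^ (n+1) - c (n+1) * ((q:ℂ) * z) ^ (n+1)
      = (l * (1 - (q:ℂ)^2) * z) * (c n * (ρ * z) ^ n) := by
    intro n
    have e1 : c (n+1) * ((q:ℂ)⁻¹ * z) ^ (n+1) - c (n+1) * ((q:ℂ) * z) ^ (n+1)
        = c (n+1) * ((q:ℂ)⁻¹^(n+1) - (q:ℂ)^(n+1)) * z^(n+1) := by
      rw [mul_pow, mul_pow]; ring
    rw [e1, hrec n, mul_pow, pow_succ]
    ring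
  rw [tsum_congr hcong, tsum_mul_left]

/-- The coefficients of the `ξ` series. -/
noncomputable def coeffc (q μ : ℝ) (E : ℕ → ℂ) (n : ℕ) : ℂ :=
  (Complex.I * μ)^n * qpow q (E n) * (1 - (q:ℂ)^2)^n / qPoch ((q:ℂ)^2) ((q:ℂ)^2) n

lemma coeff_rec (q μ : ℝ) (hq0 : 0 < q) (hq1 : q < 1) (E : ℕ → ℂ) (L R : ℂ)
    (hE : ∀ n : ℕ, E (n+1) = E n + L + n * R + (n+1)) (n : ℕ) :
    coeffc q μ E (n+1) * ((q:ℂ)⁻¹^(n+1) - (q:ℂ)^(n+1))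
      = (Complex.I * μ * qpow q L) * (qpow q R)^n * coeffc q μ E n * (1 - (q:ℂ)^2) := by
  have hqc : (q:ℂ) ≠ 0 := by exact_mod_cast hq0.ne'
  have hP := qPoch_ne_zero hq0 hq1 n
  have hF := qPoch_factor_ne hq0 hq1 n
  have hPsucc : qPoch ((q:ℂ)^2) ((q:ℂ)^2) (n+1)
      = qPoch ((q:ℂ)^2) ((q:ℂ)^2) n * (1 - (q:ℂ)^2 * ((q:ℂ)^2)^n) :=
    Finset.prod_range_succ _ n
  have hsplit : (q:ℂ)⁻¹^(n+1) - (q:ℂ)^(n+1)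
      = (q:ℂ)⁻¹^(n+1) * (1 - (q:ℂ)^2 * ((q:ℂ)^2)^n) := by
    rw [show (q:ℂ)^2 * ((q:ℂ)^2)^n = (q:ℂ)^(n+1) * (q:ℂ)^(n+1) by ring, mul_sub, mul_one,
      ← mul_assoc, ← mul_pow, inv_mul_cancel₀ hqc, one_pow, one_mul]
  have hqpow : qpow q (E (n+1))
      = qpow q L * qpow q ((n:ℂ) * R) * qpow q (E n) * (q:ℂ)^(n+1) := by
    rw [← qpow_natCast' hq0 (n+1), ← qpow_add', ← qpow_add', ← qpow_add', hE n]
    congr 1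
    push_cast; ring
  unfold coeffc
  rw [hPsucc, hsplit, hqpow, qpow_pow']
  rw [show (q:ℂ)⁻¹^(n+1) = ((q:ℂ)^(n+1))⁻¹ from inv_pow _ _]
  field_simp
  ring

/-- Exponent sequence for `ξ₁`. -/
noncomputable def Efun1 (ν : ℝ) : ℕ → ℂ :=
  fun n => (n:ℂ) * ((n:ℂ) - 1) / 2 + (n:ℂ) * (1 - Complex.I * ν)

/-- Exponent sequence for `ξ₂`. -/
noncomputable def Efun2 (ν : ℝ) (δ : ℕ) : ℕ → ℂ :=
  fun k => (3 - 2 * (δ:ℂ)) * k * ((k:ℂ) - 1) / 2 + (k:ℂ) * (1 - Complex.I * ν)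
    + (Complex.I * ν * δ - 2 * δ + 2) * k

/-- The quantum Whittaker vector condition:
`(π(B*).(ψ_R.π(B)))(z̄,z) = −μ² q^{(iν−2)(δ−1)} ψ_R(z̄, q^{2−2δ}z)` for all
nonzero `z, z̄`. -/
theorem psiR_whittaker_condition (q ν μ : ℝ) (hq0 : 0 < q) (hq1 : q < 1)
    (hμ : 0 < μ) (δ : ℕ) (hδ : δ = 0 ∨ δ = 1)
    (zb z : ℂ) (hzb : zb ≠ 0) (hz : z ≠ 0) :
    actBstar q ν (actB q ν (psiR q ν μ δ)) zb z
      = -((μ : ℂ) ^ 2) * qpow q ((Complex.I * ν - 2) * ((δ : ℂ) - 1))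
          * psiR q ν μ δ zb (qpow q (2 - 2 * (δ : ℂ)) * z) := by
  have hq2R : (0:ℝ) < 1 - q^2 := by nlinarith
  have hq2 : (1 - (q:ℂ)^2) ≠ 0 := by
    rw [show (1 - (q:ℂ)^2) = ((1 - q^2 : ℝ) : ℂ) by push_cast; ring]
    exact_mod_cast hq2R.ne'
  have hD : ((1 - (q:ℂ)^2) * z) ≠ 0 := mul_ne_zero hq2 hz
  have hDb : ((1 - (q:ℂ)^2) * zb) ≠ 0 := mul_ne_zero hq2 hzb
  have hx1 : ∀ w : ℂ, xi1 q ν μ w = ∑' n : ℕ, coeffc q μ (Efun1 ν) n * w^n := by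
    intro w
    exact tsum_congr fun n => by simp only [coeffc, Efun1]; ring
  have hx2 : ∀ w : ℂ, xi2 q ν μ δ w = ∑' n : ℕ, coeffc q μ (Efun2 ν δ) n * w^n := by
    intro w
    exact tsum_congr fun n => by simp only [coeffc, Efun2]; ring
  have hrec1 := coeff_rec q μ hq0 hq1 (Efun1 ν) (-(Complex.I * ν)) 0
    (fun n => by simp only [Efun1]; push_cast; ring)
  have hrec2 := coeff_rec q μ hq0 hq1 (Efun2 ν δ)
    (2 - Complex.I * ν + Complex.I * ν * δ - 2 * δ) (2 - 2 * (δ:ℂ))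
    (fun n => by simp only [Efun2]; push_cast; ring)
  have hρ1 : ‖qpow q (0:ℂ)‖ ≤ 1 := by rw [qpow_zero']; simp
  have hρ2 : ‖qpow q (2 - 2 * (δ:ℂ))‖ ≤ 1 := by
    rcases hδ with h | h <;> subst h
    · rw [show (2 - 2 * ((0:ℕ):ℂ)) = ((2:ℕ):ℂ) by norm_num, qpow_natCast' hq0]
      rw [norm_pow, Complex.norm_real, Real.norm_of_nonneg hq0.le]
      nlinarith
    · rw [show (2 - 2 * ((1:ℕ):ℂ)) = 0 by norm_num, qpow_zero']
      simp
  have k1 := key_shift q hq0 hq1 (coeffc q μ (Efun1 ν))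
    (Complex.I * μ * qpow q (-(Complex.I * ν))) (qpow q 0) hρ1 hrec1 zb
  simp only [qpow_zero', one_mul] at k1
  have k2 := key_shift q hq0 hq1 (coeffc q μ (Efun2 ν δ))
    (Complex.I * μ * qpow q (2 - Complex.I * ν + Complex.I * ν * δ - 2 * δ))
    (qpow q (2 - 2 * (δ:ℂ))) hρ2 hrec2 z
  have hconst : qpow q (Complex.I * ν / 2) * qpow q (Complex.I * ν / 2)
      * (Complex.I * μ * qpow q (-(Complex.I * ν)))
      * (Complex.I * μ * qpow q (2 - Complex.I * ν + Complex.I * ν * δ - 2 * δ))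
      = -((μ:ℂ)^2) * qpow q ((Complex.I * ν - 2) * ((δ:ℂ) - 1)) := by
    have h4 : qpow q (Complex.I * ν / 2) * qpow q (Complex.I * ν / 2)
        * qpow q (-(Complex.I * ν))
        * qpow q (2 - Complex.I * ν + Complex.I * ν * δ - 2 * δ)
        = qpow q ((Complex.I * ν - 2) * ((δ:ℂ) - 1)) := by
      rw [← qpow_add', ← qpow_add', ← qpow_add']
      congr 1
      ring
    calc qpow q (Complex.I * ν / 2) * qpow q (Complex.I * ν / 2)
        * (Complex.I * μ * qpow q (-(Complex.I * ν)))
        * (Complex.I * μ * qpow q (2 - Complex.I * ν + Complex.I * ν * δ - 2 * δ))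
        = (Complex.I * Complex.I) * ((μ:ℂ) * μ)
          * (qpow q (Complex.I * ν / 2) * qpow q (Complex.I * ν / 2)
            * qpow q (-(Complex.I * ν))
            * qpow q (2 - Complex.I * ν + Complex.I * ν * δ - 2 * δ)) := by ring
      _ = -((μ:ℂ)^2) * qpow q ((Complex.I * ν - 2) * ((δ:ℂ) - 1)) := by
          rw [Complex.I_mul_I, h4]; ring
  simp only [actBstar, actB, psiR, hx1, hx2]
  rw [div_sub_div_same, div_eq_iff hDb, ← mul_div_assoc, div_eq_iff hD]
  linear_combination
    (qpow q (Complex.I * ν / 2) * qpow q (Complex.I * ν / 2)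
      * ((∑' n : ℕ, coeffc q μ (Efun2 ν δ) n * ((q:ℂ)⁻¹ * z) ^ n)
        - (∑' n : ℕ, coeffc q μ (Efun2 ν δ) n * ((q:ℂ) * z) ^ n))) * k1
    + (qpow q (Complex.I * ν / 2) * qpow q (Complex.I * ν / 2)
      * (Complex.I * μ * qpow q (-(Complex.I * ν)) * (1 - (q:ℂ)^2) * zb
        * ∑' n : ℕ, coeffc q μ (Efun1 ν) n * zb ^ n)) * k2
    + ((1 - (q:ℂ)^2)^2 * zb * z
        * (∑' n : ℕ, coeffc q μ (Efun1 ν) n * zb ^ n)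
        * (∑' n : ℕ, coeffc q μ (Efun2 ν δ) n * (qpow q (2 - 2 * (δ:ℂ)) * z) ^ n)) * hconst
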